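/- The parameters w = 0 (in the limit) with any b < 0 are saddle points of the ReLU loss: as b/‖w‖ → −∞, the gradients with respect to both w and b tend to zero, while the loss at such points is not the global minimum when γ ≠ 0 or Δ > 0. -/

import Mathlib

open MeasureTheory ProbabilityTheory Matrix

/-- The standard multivariate Gaussian `N(0, I_L)` on `ℝ^L`. -/
noncomputable def stdGaussian (L : ℕ) : Measure (Fin L → ℝ) :=
  Measure.pi fun _ => gaussianReal 0 1

/-- Euclidean norm of a vector in `ℝ^L`. -/
noncomputable def l2norm {L : ℕ} (v : Fin L → ℝ) : ℝ :=
  Real.sqrt (∑ i, (v i) ^ 2)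

/-- The standard normal pdf `φ`. -/
noncomputable def phiPdf (t : ℝ) : ℝ :=
  Real.exp (-t ^ 2 / 2) / Real.sqrt (2 * Real.pi)

/-- The standard normal CDF `Φ`. -/
noncomputable def Phi (t : ℝ) : ℝ :=
  ∫ s in Set.Iic t, phiPdf s

open Filter Set

lemma aux_phiPdf_nonneg (t : ℝ) : 0 ≤ phiPdf t :=
  div_nonneg (Real.exp_nonneg _) (Real.sqrt_nonneg _)

lemma aux_phiPdf_eq : phiPdf = fun t => Real.exp (-(1/2) * t ^ 2) / Real.sqrt (2 * Real.pi) := by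
  funext t
  rw [phiPdf, show -t ^ 2 / 2 = -(1/2) * t ^ 2 by ring]

lemma aux_integrable_phiPdf : MeasureTheory.Integrable phiPdf := by
  rw [aux_phiPdf_eq]
  simp_rw [div_eq_mul_inv]
  exact (integrable_exp_neg_mul_sq (by norm_num : (0:ℝ) < 1/2)).mul_const _

lemma aux_Phi_nonneg (t : ℝ) : 0 ≤ Phi t :=
  setIntegral_nonneg measurableSet_Iic fun s _ => aux_phiPdf_nonneg s

lemma aux_Phi_tendsto_zero : Tendsto Phi atBot (nhds 0) := by
  have hb : Tendsto (fun t : ℝ => Real.exp t / Real.sqrt (2 * Real.pi)) atBot (nhds 0) := by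
    simpa using Real.tendsto_exp_atBot.div_const (Real.sqrt (2 * Real.pi))
  refine tendsto_of_tendsto_of_tendsto_of_le_of_le' tendsto_const_nhds hb
    (Eventually.of_forall fun t => aux_Phi_nonneg t) ?_
  filter_upwards [eventually_le_atBot (-2 : ℝ)] with t ht
  have hmono : ∀ s ∈ Set.Iic t, phiPdf s ≤ Real.exp s / Real.sqrt (2 * Real.pi) := by
    intro s hs
    have hs2 : s ≤ -2 := le_trans hs ht
    have harg : -s ^ 2 / 2 ≤ s := by nlinarith
    rw [phiPdf]
    gcongr
  calc Phi t ≤ ∫ s in Set.Iic t, Real.exp s / Real.sqrt (2 * Real.pi) :=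
        setIntegral_mono_on aux_integrable_phiPdf.integrableOn
          ((integrableOn_exp_Iic t).div_const _) measurableSet_Iic hmono
    _ = Real.exp t / Real.sqrt (2 * Real.pi) := by rw [integral_div, integral_exp_Iic]

lemma aux_cocompact (s : ℝ) :
    Tendsto (fun x : ℝ => |x| ^ s * Real.exp (-(1/2) * x ^ 2)) atBot (nhds 0) := by
  have h := tendsto_rpow_abs_mul_exp_neg_mul_sq_cocompact (a := (1/2 : ℝ)) (by norm_num) s
  exact h.mono_left (by rw [cocompact_eq_atBot_atTop]; exact le_sup_left)

lemma aux_phiPdf_tendsto_zero : Tendsto phiPdf atBot (nhds 0) := by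
  have h : Tendsto (fun x : ℝ => Real.exp (-(1/2) * x ^ 2)) atBot (nhds 0) := by
    have := aux_cocompact 0
    simpa [Real.rpow_zero] using this
  rw [aux_phiPdf_eq]
  simpa using h.div_const (Real.sqrt (2 * Real.pi))

lemma aux_mul_phiPdf_tendsto_zero : Tendsto (fun t => t * phiPdf t) atBot (nhds 0) := by
  have h1 : Tendsto (fun x : ℝ => |x| * Real.exp (-(1/2) * x ^ 2)) atBot (nhds 0) := by
    have := aux_cocompact 1
    simpa [Real.rpow_one] using this
  have h2 : Tendsto (fun x : ℝ => |x| * Real.exp (-(1/2) * x ^ 2) / Real.sqrt (2 * Real.pi))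
      atBot (nhds 0) := by simpa using h1.div_const (Real.sqrt (2 * Real.pi))
  refine squeeze_zero_norm (fun t => ?_) h2
  have heq : ‖t * phiPdf t‖ = |t| * phiPdf t := by
    rw [Real.norm_eq_abs, abs_mul, abs_of_nonneg (aux_phiPdf_nonneg t)]
  rw [heq, aux_phiPdf_eq, mul_div_assoc]

lemma aux_map_eval_pi {ι : Type*} [Fintype ι] [DecidableEq ι] {α : ι → Type*}
    [∀ i, MeasurableSpace (α i)] (μ : ∀ i, Measure (α i)) [∀ i, IsProbabilityMeasure (μ i)]
    (i : ι) : (Measure.pi μ).map (fun x => x i) = μ i := by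
  ext s hs
  rw [Measure.map_apply (measurable_pi_apply i) hs]
  have hpre : (fun x : ∀ j, α j => x i) ⁻¹' s =
      Set.pi Set.univ (Function.update (fun j => (Set.univ : Set (α j))) i s) :=
    Set.eval_preimage
  rw [hpre, Measure.pi_pi, Finset.prod_eq_single i]
  · rw [Function.update_self]
  · intro j _ hj
    rw [Function.update_of_ne hj]
    exact measure_univ
  · exact fun h => absurd (Finset.mem_univ i) h

/-- Dead-cone saddle points: as `t = b/‖w‖ → −∞`, the three gradient expressions
`ã_i Φ(t)` (for `i ≠ L`), `ã_L Φ(t) + (c − ã_L t) φ(t)`, and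
`ã_L φ(t) + c Φ(t)` all tend to `0` (for any fixed `ã_L`, `c`); yet for
`Γ = γ e_L` with `γ ≠ 0` or `Δ > 0`, the true ReLU loss at `w = 0`, `b < 0` is
strictly larger than the global minimum value at `(Γ, Δ)`, so such points are
saddle points, not global minima. -/
theorem dead_cone_saddle (L : ℕ) (γ Δ : ℝ) (Γ : Fin (L + 1) → ℝ)
    (hΓ : Γ = Pi.single (Fin.last L) γ) (h : γ ≠ 0 ∨ Δ > 0)
    (aL c : ℝ)
    (Lf : (Fin (L + 1) → ℝ) → ℝ → ℝ)
    (hLf : ∀ w b, Lf w b = ∫ x, (1 / 2) *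
      (max (w ⬝ᵥ x + b) 0 - max (Γ ⬝ᵥ x + Δ) 0) ^ 2 ∂ stdGaussian (L + 1)) :
    Filter.Tendsto (fun t => aL * Phi t) Filter.atBot (nhds 0) ∧
    Filter.Tendsto (fun t => aL * Phi t + (c - aL * t) * phiPdf t)
      Filter.atBot (nhds 0) ∧
    Filter.Tendsto (fun t => aL * phiPdf t + c * Phi t) Filter.atBot (nhds 0) ∧
    ∀ b < (0 : ℝ), Lf Γ Δ < Lf 0 b := by
  refine ⟨?_, ?_, ?_, ?_⟩
  · simpa using aux_Phi_tendsto_zero.const_mul aL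
  · have h1 : Tendsto (fun t => aL * Phi t + (c * phiPdf t - aL * (t * phiPdf t))) atBot
        (nhds (aL * 0 + (c * 0 - aL * 0))) :=
      (aux_Phi_tendsto_zero.const_mul aL).add
        ((aux_phiPdf_tendsto_zero.const_mul c).sub (aux_mul_phiPdf_tendsto_zero.const_mul aL))
    have heq : (fun t => aL * Phi t + (c - aL * t) * phiPdf t)
        = fun t => aL * Phi t + (c * phiPdf t - aL * (t * phiPdf t)) := by
      funext t; ring
    rw [heq]
    simpa using h1
  · simpa using (aux_phiPdf_tendsto_zero.const_mul aL).add (aux_Phi_tendsto_zero.const_mul c)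
  · intro b hb
    have hA : Lf Γ Δ = 0 := by rw [hLf]; simp
    set g : ℝ → ℝ := fun y => (1 / 2) * max (γ * y + Δ) 0 ^ 2 with hgdef
    have hgcont : Continuous g := by
      apply Continuous.mul continuous_const
      exact (((continuous_const.mul continuous_id).add continuous_const).max
        continuous_const).pow 2
    have hgnn : ∀ y, 0 ≤ g y := fun y => by
      rw [hgdef]; positivity
    have hmap : (stdGaussian (L + 1)).map (fun x => x (Fin.last L)) = gaussianReal 0 1 := by
      rw [_root_.stdGaussian]
      exact aux_map_eval_pi _ (Fin.last L)
    -- integrability of g under the 1d Gaussian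
    have hint1 : Integrable g (gaussianReal 0 1) := by
      rw [gaussianReal_of_var_ne_zero 0 one_ne_zero,
        integrable_withDensity_iff (measurable_gaussianPDF 0 1)
          (MeasureTheory.ae_of_all _ fun x => ENNReal.ofReal_lt_top)]
      have hsq : Integrable (fun y : ℝ => y ^ 2 * Real.exp (-(1/2) * y ^ 2)) := by
        have := integrable_rpow_mul_exp_neg_mul_sq (b := (1/2 : ℝ)) (by norm_num)
          (s := 2) (by norm_num)
        simpa [show ∀ x : ℝ, x ^ (2 : ℝ) = x ^ 2 from fun x => by
          rw [show (2 : ℝ) = ((2 : ℕ) : ℝ) by norm_num, Real.rpow_natCast]] using this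
      have hlin : Integrable (fun y : ℝ => y * Real.exp (-(1/2) * y ^ 2)) :=
        integrable_mul_exp_neg_mul_sq (by norm_num)
      have hexp : Integrable (fun y : ℝ => Real.exp (-(1/2) * y ^ 2)) :=
        integrable_exp_neg_mul_sq (by norm_num)
      set C := (Real.sqrt (2 * Real.pi))⁻¹ with hC
      have hbound : Integrable (fun y : ℝ => (1/2) * C *
          (γ ^ 2 * (y ^ 2 * Real.exp (-(1/2) * y ^ 2)) +
           (2 * γ * Δ) * (y * Real.exp (-(1/2) * y ^ 2)) +
           Δ ^ 2 * Real.exp (-(1/2) * y ^ 2))) volume :=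
        (((hsq.const_mul _).add (hlin.const_mul _)).add (hexp.const_mul _)).const_mul _
      refine hbound.mono' ?_ ?_
      · exact (hgcont.measurable.mul
          (measurable_gaussianPDF 0 1).ennreal_toReal).aestronglyMeasurable
      · refine MeasureTheory.ae_of_all _ fun y => ?_
        have hpdfval : (gaussianPDF 0 1 y).toReal = C * Real.exp (-(1/2) * y ^ 2) := by
          rw [gaussianPDF_def, ENNReal.toReal_ofReal (gaussianPDFReal_nonneg 0 1 y),
            gaussianPDFReal_def]
          simp only [NNReal.coe_one, mul_one, sub_zero]
          rw [show -y ^ 2 / 2 = -(1/2) * y ^ 2 by ring, hC]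
        rw [Real.norm_eq_abs, abs_of_nonneg (mul_nonneg (hgnn y) ENNReal.toReal_nonneg),
          hpdfval]
        have hmax : max (γ * y + Δ) 0 ^ 2 ≤ (γ * y + Δ) ^ 2 := by
          rcases le_total (γ * y + Δ) 0 with hle | hle
          · rw [max_eq_right hle]
            simpa using sq_nonneg (γ * y + Δ)
          · rw [max_eq_left hle]
        have hCE : 0 ≤ C * Real.exp (-(1/2) * y ^ 2) :=
          mul_nonneg (inv_nonneg.mpr (Real.sqrt_nonneg _)) (Real.exp_nonneg _)
        calc g y * (C * Real.exp (-(1/2) * y ^ 2))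
            ≤ ((1/2) * (γ * y + Δ) ^ 2) * (C * Real.exp (-(1/2) * y ^ 2)) := by
              refine mul_le_mul_of_nonneg_right ?_ hCE
              rw [hgdef]
              exact mul_le_mul_of_nonneg_left hmax (by norm_num)
          _ = (1/2) * C *
              (γ ^ 2 * (y ^ 2 * Real.exp (-(1/2) * y ^ 2)) +
               (2 * γ * Δ) * (y * Real.exp (-(1/2) * y ^ 2)) +
               Δ ^ 2 * Real.exp (-(1/2) * y ^ 2)) := by ring
    -- the support has positive Gaussian measure
    have hU : 0 < (gaussianReal 0 1) {y : ℝ | 0 < γ * y + Δ} := by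
      have hopen : IsOpen {y : ℝ | 0 < γ * y + Δ} :=
        isOpen_lt continuous_const ((continuous_const.mul continuous_id).add continuous_const)
      have hne : {y : ℝ | 0 < γ * y + Δ}.Nonempty := by
        rcases h with hγ | hΔ
        · refine ⟨(1 - Δ) / γ, ?_⟩
          have : γ * ((1 - Δ) / γ) + Δ = 1 := by field_simp; ring
          simp only [Set.mem_setOf_eq, this]
          norm_num
        · exact ⟨0, by simpa using hΔ⟩
      refine pos_iff_ne_zero.mpr fun h0 => ?_
      have hvol := gaussianReal_absolutelyContinuous' 0 one_ne_zero h0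
      exact (hopen.measure_pos volume hne).ne' hvol
    have hsupp : {y : ℝ | 0 < γ * y + Δ} ⊆ Function.support g := by
      intro y hy
      have hy' : (0 : ℝ) < γ * y + Δ := hy
      have : 0 < g y := by
        rw [hgdef]
        exact mul_pos (by norm_num) (pow_pos (lt_max_of_lt_left hy') 2)
      exact this.ne'
    have hpos : 0 < ∫ y, g y ∂(gaussianReal 0 1) := by
      rw [integral_pos_iff_support_of_nonneg (fun y => hgnn y) hint1]
      exact lt_of_lt_of_le hU (measure_mono hsupp)
    have hintc_eq : ∫ x, g (x (Fin.last L)) ∂(stdGaussian (L + 1))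
        = ∫ y, g y ∂(gaussianReal 0 1) := by
      rw [← hmap]
      exact (integral_map (measurable_pi_apply (Fin.last L)).aemeasurable
        hgcont.aestronglyMeasurable).symm
    have hB : Lf 0 b = ∫ y, g y ∂(gaussianReal 0 1) := by
      rw [hLf, ← hintc_eq]
      congr 1
      funext x
      rw [hΓ, single_dotProduct, zero_dotProduct, zero_add, max_eq_right hb.le, zero_sub,
        neg_pow]
      simp [hgdef]
    rw [hA, hB]
    exact hpos
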